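/- Let λ > 0 and r ∈ ℝ satisfy |r| ≤ t_{2/3,λ} = (48^{1/4}/3)·λ^{3/4}. Then β = 0 is a global minimizer over β ∈ ℝ of the function β ↦ (β − r)² + λ|β|^{2/3}; that is, for every β ∈ ℝ, r² ≤ (β − r)² + λ|β|^{2/3}. -/

import Mathlib

/-- The threshold value `t_{2/3,λ} = (48^{1/4}/3)·λ^{3/4}`. -/
noncomputable def t23 (lam : ℝ) : ℝ :=
  (48 : ℝ) ^ ((1 : ℝ) / 4) / 3 * lam ^ ((3 : ℝ) / 4)

theorem stmt_3 (lam r : ℝ) (hlam : 0 < lam) (hr : |r| ≤ t23 lam) :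
    ∀ β : ℝ, r ^ 2 ≤ (β - r) ^ 2 + lam * |β| ^ ((2 : ℝ) / 3) := by
  intro β
  set a : ℝ := (lam / 3) ^ ((1 : ℝ) / 4) with ha
  have hl3 : (0:ℝ) < lam / 3 := by linarith
  have ha0 : 0 < a := Real.rpow_pos_of_pos hl3 _
  have ha4 : a ^ 4 = lam / 3 := by
    rw [ha, ← Real.rpow_natCast _ 4, ← Real.rpow_mul hl3.le]
    norm_num
  have hlam4 : lam = 3 * a ^ 4 := by rw [ha4]; ring
  set u : ℝ := |β| ^ ((1 : ℝ) / 3) with hu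
  have hu0 : 0 ≤ u := Real.rpow_nonneg (abs_nonneg _) _
  have hu3 : u ^ 3 = |β| := by
    rw [hu, ← Real.rpow_natCast _ 3, ← Real.rpow_mul (abs_nonneg _)]
    norm_num
  have hu2 : u ^ 2 = |β| ^ ((2 : ℝ) / 3) := by
    rw [hu, ← Real.rpow_natCast _ 2, ← Real.rpow_mul (abs_nonneg _)]
    norm_num
  have ht : t23 lam = 2 * a ^ 3 := by
    have h3pos : (0:ℝ) < (3:ℝ) ^ ((3:ℝ)/4) := Real.rpow_pos_of_pos (by norm_num) _
    have ha3 : a ^ 3 = lam ^ ((3:ℝ)/4) / 3 ^ ((3:ℝ)/4) := by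
      rw [ha, ← Real.rpow_natCast _ 3, ← Real.rpow_mul hl3.le,
        Real.div_rpow hlam.le (by norm_num : (0:ℝ) ≤ 3)]
      norm_num
    have h48 : (48 : ℝ) ^ ((1 : ℝ) / 4) = 2 * 3 ^ ((1 : ℝ) / 4) := by
      rw [show (48:ℝ) = 2 ^ (4:ℕ) * 3 by norm_num,
        Real.mul_rpow (by positivity) (by norm_num),
        ← Real.rpow_natCast (2:ℝ) 4, ← Real.rpow_mul (by norm_num : (0:ℝ) ≤ 2)]
      norm_num
    have h3 : (3 : ℝ) ^ ((3 : ℝ) / 4) * 3 ^ ((1 : ℝ) / 4) = 3 := by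
      rw [← Real.rpow_add (by norm_num : (0:ℝ) < 3)]
      norm_num
    rw [t23, h48, ha3]
    field_simp
    linear_combination h3
  have hrβ : r * β ≤ |r| * |β| := by
    calc r * β ≤ |r * β| := le_abs_self _
    _ = |r| * |β| := abs_mul _ _
  have hr2 : |r| ≤ 2 * a ^ 3 := ht ▸ hr
  have hβ2 : β ^ 2 = u ^ 6 := by
    rw [show u ^ 6 = (u ^ 3) ^ 2 by ring, hu3, sq_abs]
  have hab : |r| * |β| ≤ 2 * a ^ 3 * u ^ 3 := by
    rw [← hu3]; exact mul_le_mul_of_nonneg_right hr2 (by positivity)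
  have key : 0 ≤ u ^ 2 * ((u - a) ^ 2 * (u ^ 2 + 2 * a * u + 3 * a ^ 2)) := by positivity
  have expand : u ^ 2 * ((u - a) ^ 2 * (u ^ 2 + 2 * a * u + 3 * a ^ 2))
      = u ^ 6 - 4 * a ^ 3 * u ^ 3 + 3 * a ^ 4 * u ^ 2 := by ring
  have goal2 : 0 ≤ β ^ 2 - 2 * (r * β) + lam * u ^ 2 := by
    rw [hβ2, hlam4]; linarith [key.trans_eq expand]
  have final : (β - r) ^ 2 + lam * u ^ 2 - r ^ 2 = β ^ 2 - 2 * (r * β) + lam * u ^ 2 := by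
    ring
  rw [← hu2]
  linarith [goal2, final]
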